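/- Let d be even and let F₁,…,F_d be symmetric distribution functions with zero means (i.e., F_i⁻¹(u) = −F_i⁻¹(1−u)). Then the supremum of E(X₁⋯X_d) over all couplings with X_i ~ F_i equals E(∏_{i=1}^d G_i⁻¹(U)), where G_i is the distribution function of |X_i|, and it is attained by the comonotonic coupling X_i = F_i⁻¹(U), U ~ Uniform[0,1]. -/

import Mathlib

open MeasureTheory Set ProbabilityTheory Filter Topology

/-- Generalized inverse (quantile function). -/
noncomputable def quantile (ν : Measure ℝ) (u : ℝ) : ℝ :=
  sInf {x : ℝ | u ≤ (ν (Iic x)).toReal}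

variable {ν : Measure ℝ} [IsProbabilityMeasure ν]

lemma quantile_set_eq (u : ℝ) : {x : ℝ | u ≤ (ν (Iic x)).toReal} = {x : ℝ | u ≤ cdf ν x} := by
  ext x; simp [cdf_eq_real, measureReal_def]

omit [IsProbabilityMeasure ν] in
lemma qset_nonempty {u : ℝ} (hu1 : u < 1) : {x : ℝ | u ≤ cdf ν x}.Nonempty :=
  ((tendsto_cdf_atTop (μ := ν)).eventually_const_le hu1).exists

omit [IsProbabilityMeasure ν] in
lemma qset_bddBelow {u : ℝ} (hu0 : 0 < u) : BddBelow {x : ℝ | u ≤ cdf ν x} := by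
  obtain ⟨x0, hx0⟩ := ((tendsto_cdf_atBot (μ := ν)).eventually_lt_const hu0).exists
  refine ⟨x0, fun x hx => ?_⟩
  by_contra hlt
  push_neg at hlt
  exact absurd hx (not_le.mpr (lt_of_le_of_lt (monotone_cdf ν hlt.le) hx0))

lemma cdf_quantile_ge {u : ℝ} (hu0 : 0 < u) (hu1 : u < 1) : u ≤ cdf ν (quantile ν u) := by
  rw [quantile, quantile_set_eq]
  set S := {x : ℝ | u ≤ cdf ν x} with hS
  have hne : S.Nonempty := qset_nonempty hu1
  have hbd : BddBelow S := qset_bddBelow hu0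
  have hsub : S ⊆ Ici (sInf S) := fun x hx => csInf_le hbd hx
  have hrc : ContinuousWithinAt (cdf ν) S (sInf S) :=
    ((cdf ν).right_continuous _).mono hsub
  have hcl : sInf S ∈ closure S := csInf_mem_closure hne hbd
  have hnb : (𝓝[S] (sInf S)).NeBot := mem_closure_iff_nhdsWithin_neBot.mp hcl
  exact ge_of_tendsto hrc (eventually_nhdsWithin_of_forall (fun x hx => hx))

/-- Galois connection for the quantile. -/
lemma quantile_le_iff {u t : ℝ} (hu0 : 0 < u) (hu1 : u < 1) :
    quantile ν u ≤ t ↔ u ≤ (ν (Iic t)).toReal := by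
  rw [← measureReal_def, ← cdf_eq_real]
  constructor
  · intro h
    exact le_trans (cdf_quantile_ge hu0 hu1) (monotone_cdf ν h)
  · intro h
    rw [quantile, quantile_set_eq]
    exact csInf_le (qset_bddBelow hu0) h

lemma lt_quantile_iff {u t : ℝ} (hu0 : 0 < u) (hu1 : u < 1) :
    t < quantile ν u ↔ (ν (Iic t)).toReal < u := by
  rw [← not_le, ← not_le, quantile_le_iff hu0 hu1]

section Symmetric
variable (hsym : ν.map (fun x => -x) = ν)

omit [IsProbabilityMeasure ν] in
include hsym in
lemma sym_Iic_neg (x : ℝ) : ν (Iic (-x)) = ν (Ici x) := by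
  conv_lhs => rw [← hsym]
  rw [Measure.map_apply measurable_neg measurableSet_Iic]
  congr 1
  ext y; simp [neg_le]

omit [IsProbabilityMeasure ν] in
include hsym in
lemma sym_Iio_neg (x : ℝ) : ν (Iio (-x)) = ν (Ioi x) := by
  conv_lhs => rw [← hsym]
  rw [Measure.map_apply measurable_neg measurableSet_Iio]
  congr 1
  ext y; simp [neg_lt, lt_neg]
end Symmetric

lemma measure_Iio_le {a : ℝ} {u : ℝ} (h : ∀ x < a, (ν (Iic x)).toReal ≤ u) (hu : 0 ≤ u) :
    ν (Iio a) ≤ ENNReal.ofReal u := by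
  have : Iio a = ⋃ n : ℕ, Iic (a - (n + 1 : ℝ)⁻¹) := by
    ext x
    simp only [mem_Iio, mem_iUnion, mem_Iic]
    constructor
    · intro hx
      obtain ⟨n, hn⟩ := exists_nat_one_div_lt (sub_pos.mpr hx)
      refine ⟨n, ?_⟩
      rw [one_div] at hn
      linarith
    · rintro ⟨n, hn⟩
      have : (0:ℝ) < (n+1 : ℝ)⁻¹ := by positivity
      linarith
  rw [this, Directed.measure_iUnion ?hmono]
  case hmono =>
    refine (monotone_nat_of_le_succ fun n => Iic_subset_Iic.mpr ?_).directed_le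
    have h1 : (0:ℝ) < (n + 1 : ℝ) := by positivity
    have h2 : (n + 1 : ℝ) ≤ (n + 1 + 1 : ℝ) := by linarith
    have := inv_anti₀ h1 h2
    push_cast
    linarith
  refine iSup_le fun n => ?_
  have hx : a - (n + 1 : ℝ)⁻¹ < a := by
    have : (0:ℝ) < (n+1 : ℝ)⁻¹ := by positivity
    linarith
  exact ENNReal.le_ofReal_iff_toReal_le (measure_ne_top _ _) hu |>.mpr (h _ hx)

lemma cdf_lt_of_lt_quantile {w x : ℝ} (hw0 : 0 < w) (hx : x < quantile ν w) :
    (ν (Iic x)).toReal < w := by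
  by_contra h
  push_neg at h
  have hxS : x ∈ {x : ℝ | w ≤ (ν (Iic x)).toReal} := h
  have : quantile ν w ≤ x := by
    rw [quantile]
    exact csInf_le (by rw [quantile_set_eq]; exact qset_bddBelow hw0) hxS
  exact absurd hx (not_lt.mpr this)

lemma toReal_Ioi (a : ℝ) : (ν (Ioi a)).toReal = 1 - (ν (Iic a)).toReal := by
  have h := measure_compl (measurableSet_Iic (a := a)) (measure_ne_top ν _)
  rw [compl_Iic] at h
  rw [h, measure_univ, ENNReal.toReal_sub_of_le prob_le_one ENNReal.one_ne_top,
    ENNReal.toReal_one]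

section Sym2
variable (hsym : ν.map (fun x => -x) = ν)

include hsym in
lemma quantile_le_neg {u : ℝ} (hu : u ∈ Ioo (0:ℝ) 1) :
    quantile ν u ≤ -quantile ν (1 - u) := by
  obtain ⟨hu0, hu1⟩ := hu
  rw [quantile_le_iff hu0 hu1]
  have hIio : ν (Iio (quantile ν (1 - u))) ≤ ENNReal.ofReal (1 - u) := by
    refine measure_Iio_le (fun x hx => (cdf_lt_of_lt_quantile (by linarith) hx).le) (by linarith)
  have h2 : ν (Ici (quantile ν (1 - u))) = 1 - ν (Iio (quantile ν (1 - u))) := by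
    have h := measure_compl (measurableSet_Iio (a := quantile ν (1-u))) (measure_ne_top ν _)
    rw [compl_Iio] at h
    rw [h, measure_univ]
  have key : ENNReal.ofReal u ≤ ν (Iic (-quantile ν (1 - u))) := by
    rw [sym_Iic_neg hsym, h2]
    calc ENNReal.ofReal u = 1 - ENNReal.ofReal (1 - u) := by
          rw [← ENNReal.ofReal_one, ← ENNReal.ofReal_sub _ (by linarith)]
          norm_num
      _ ≤ 1 - ν (Iio (quantile ν (1 - u))) := tsub_le_tsub_left hIio 1
  calc u = (ENNReal.ofReal u).toReal := by rw [ENNReal.toReal_ofReal hu0.le]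
    _ ≤ _ := ENNReal.toReal_mono (measure_ne_top _ _) key

include hsym in
lemma neg_le_quantile {u v : ℝ} (hu : u ∈ Ioo (0:ℝ) 1) (hv : v ∈ Ioo (0:ℝ) 1) (huv : u < v) :
    -quantile ν (1 - u) ≤ quantile ν v := by
  by_contra hcon
  push_neg at hcon
  have h1 : (1:ℝ) - u ∈ Ioo (0:ℝ) 1 := ⟨by linarith [hu.2], by linarith [hu.1]⟩
  have hq1 : (1:ℝ) - u ≤ (ν (Iic (quantile ν (1 - u)))).toReal := by
    rw [← measureReal_def, ← cdf_eq_real]; exact cdf_quantile_ge h1.1 h1.2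
  have hqv : v ≤ (ν (Iic (quantile ν v))).toReal := by
    rw [← measureReal_def, ← cdf_eq_real]; exact cdf_quantile_ge hv.1 hv.2
  have hsub : Iic (quantile ν v) ⊆ Iio (-(quantile ν (1 - u))) :=
    fun y hy => lt_of_le_of_lt hy hcon
  have hmono : ν (Iic (quantile ν v)) ≤ ν (Iio (-(quantile ν (1 - u)))) := measure_mono hsub
  rw [sym_Iio_neg hsym] at hmono
  have : (ν (Ioi (quantile ν (1 - u)))).toReal = 1 - (ν (Iic (quantile ν (1-u)))).toReal :=
    toReal_Ioi _
  have hle : (ν (Iic (quantile ν v))).toReal ≤ (ν (Ioi (quantile ν (1 - u)))).toReal :=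
    ENNReal.toReal_mono (measure_ne_top _ _) hmono
  linarith

include hsym in
lemma quantile_symm_ae : ∀ᵐ u ∂(volume.restrict (Ioo (0:ℝ) 1)),
    quantile ν (1 - u) = -quantile ν u := by
  set B := {u ∈ Ioo (0:ℝ) 1 | quantile ν u < -quantile ν (1 - u)} with hB
  have hcount : B.Countable := by
    apply Set.PairwiseDisjoint.countable_of_isOpen
      (s := fun u => Ioo (quantile ν u) (-quantile ν (1 - u)))
    · intro u hu v hv huv
      rcases lt_or_gt_of_ne huv with h | h
      · refine Disjoint.mono (le_refl _) (le_refl _) ?_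
        apply Set.disjoint_left.mpr
        intro x hx hx'
        have h1 : x < -quantile ν (1 - u) := hx.2
        have h2 : quantile ν v < x := hx'.1
        have := neg_le_quantile hsym hu.1 hv.1 h
        linarith
      · apply Set.disjoint_left.mpr
        intro x hx hx'
        have := neg_le_quantile hsym hv.1 hu.1 h
        have h1 : x < -quantile ν (1 - v) := hx'.2
        have h2 : quantile ν u < x := hx.1
        linarith
    · exact fun u _ => isOpen_Ioo
    · exact fun u hu => nonempty_Ioo.mpr hu.2
  have hnull : volume B = 0 := hcount.measure_zero _
  rw [ae_restrict_iff' measurableSet_Ioo]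
  refine (measure_mono_null ?_ hnull)
  intro u hu
  simp only [mem_compl_iff, mem_setOf_eq] at hu
  push_neg at hu
  rcases hu with ⟨huI, hne⟩
  have hle := quantile_le_neg hsym huI
  have : quantile ν u < -quantile ν (1 - u) := lt_of_le_of_ne hle (by
    intro h; exact hne (by linarith [h]))
  exact ⟨huI, this⟩
end Sym2

lemma abs_Iic_neg_lt {x : ℝ} (hx : x < 0) : (ν.map (fun y => |y|)) (Iic x) = 0 := by
  rw [Measure.map_apply measurable_abs measurableSet_Iic]
  convert measure_empty
  · ext y; simp only [mem_preimage, mem_Iic, mem_empty_iff_false, iff_false, not_le]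
    exact lt_of_lt_of_le hx (abs_nonneg y)
  · infer_instance

section SymAbs
variable (hsym : ν.map (fun x => -x) = ν)

include hsym in
lemma cdf_nonpos_le_half {x : ℝ} (hx : x < 0) : (ν (Iic x)).toReal ≤ 1/2 := by
  have h1 : ν (Iic x) ≤ ν (Iio 0) := measure_mono (fun y hy => lt_of_le_of_lt hy hx)
  have h2 : ν (Iio 0) = ν (Ioi 0) := by
    have := sym_Iio_neg hsym 0
    rwa [neg_zero] at this
  have h3 : ν (Iio 0) + ν (Ioi 0) ≤ 1 := by
    rw [← measure_univ (μ := ν)]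
    rw [← measure_union (by apply Set.disjoint_left.mpr; intro y hy hy'; exact absurd (mem_Ioi.mp hy') (not_lt.mpr (le_of_lt hy))) measurableSet_Ioi]
    exact measure_mono (subset_univ _)
  rw [← h2, ← two_mul] at h3
  have h4 : (ν (Iio 0)).toReal ≤ 1/2 := by
    have := ENNReal.toReal_mono ENNReal.one_ne_top h3
    rw [ENNReal.toReal_mul, ENNReal.toReal_one] at this
    norm_num at this
    linarith
  calc (ν (Iic x)).toReal ≤ (ν (Iio 0)).toReal := ENNReal.toReal_mono (measure_ne_top _ _) h1
    _ ≤ 1/2 := h4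

include hsym in
lemma abs_cdf_eq {x : ℝ} (hx : 0 ≤ x) :
    ((ν.map (fun y => |y|)) (Iic x)).toReal = 2 * (ν (Iic x)).toReal - 1 := by
  rw [Measure.map_apply measurable_abs measurableSet_Iic]
  have hpre : (fun y => |y|) ⁻¹' Iic x = Icc (-x) x := by
    ext y; simp [abs_le]
  rw [hpre]
  have hunion : Iio (-x) ∪ Icc (-x) x = Iic x := by
    ext y
    simp only [mem_union, mem_Iio, mem_Icc, mem_Iic]
    constructor
    · rintro (h | h)
      · linarith
      · exact h.2
    · intro h
      rcases lt_or_ge y (-x) with h' | h'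
      · exact Or.inl h'
      · exact Or.inr ⟨h', h⟩
  have hdisj : Disjoint (Iio (-x)) (Icc (-x) x) := by
    apply Set.disjoint_left.mpr
    intro y hy hy'
    exact absurd hy'.1 (not_le.mpr hy)
  have hm := measure_union hdisj measurableSet_Icc (μ := ν)
  rw [hunion] at hm
  have hIio : (ν (Iio (-x))).toReal = 1 - (ν (Iic x)).toReal := by
    rw [sym_Iio_neg hsym, toReal_Ioi]
  have := congrArg ENNReal.toReal hm
  rw [ENNReal.toReal_add (measure_ne_top _ _) (measure_ne_top _ _), hIio] at this
  linarith

include hsym in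
lemma quantile_abs_eq {v : ℝ} (hv : v ∈ Ioo (0:ℝ) 1) :
    quantile (ν.map (fun y => |y|)) v = quantile ν ((1 + v)/2) := by
  unfold quantile
  congr 1
  ext x
  simp only [mem_setOf_eq]
  rcases lt_or_ge x 0 with hx | hx
  · rw [abs_Iic_neg_lt hx]
    simp only [ENNReal.toReal_zero]
    constructor
    · intro h; linarith [hv.1]
    · intro h
      have := cdf_nonpos_le_half hsym hx
      linarith [hv.1]
  · rw [abs_cdf_eq hsym hx]
    constructor <;> intro h <;> linarith

end SymAbs

lemma quantile_abs_nonneg {u : ℝ} (hu : 0 < u) (ν₀ : Measure ℝ) :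
    0 ≤ quantile (ν₀.map (fun y => |y|)) u := by
  apply Real.sInf_nonneg
  intro x hx
  by_contra hneg
  push_neg at hneg
  have h0 : (ν₀.map (fun y => |y|)) (Iic x) = 0 := by
    rw [Measure.map_apply measurable_abs measurableSet_Iic]
    convert measure_empty
    · ext y; simp only [mem_preimage, mem_Iic, mem_empty_iff_false, iff_false, not_le]
      exact lt_of_lt_of_le hneg (abs_nonneg y)
    · infer_instance
  rw [mem_setOf_eq, h0] at hx
  simp at hx
  linarith

section Layer
variable {α : Type*} [MeasurableSpace α] {d : ℕ}

/-- Layer-cake / Tonelli: for a.e.-nonneg products expressed via a measurable "hypograph" set. -/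
lemma layer_cake (m : Measure α) [SFinite m] (A : Set (α × (Fin d → ℝ))) (hA : MeasurableSet A)
    (f : Fin d → α → ℝ)
    (hae : ∀ᵐ a ∂m, (∀ i, 0 ≤ f i a) ∧ ∀ t : Fin d → ℝ,
      ((a, t) ∈ A ↔ ∀ i, t i ∈ Ico 0 (f i a))) :
    ∫⁻ a, ENNReal.ofReal (∏ i, f i a) ∂m
      = ∫⁻ t : Fin d → ℝ, m {a | (a, t) ∈ A} ∂volume := by
  have h1 : ∫⁻ a, ENNReal.ofReal (∏ i, f i a) ∂m
      = ∫⁻ a, volume {t : Fin d → ℝ | (a, t) ∈ A} ∂m := by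
    refine lintegral_congr_ae ?_
    filter_upwards [hae] with a ⟨hpos, hiff⟩
    have : {t : Fin d → ℝ | (a, t) ∈ A} = Set.pi univ (fun i => Ico 0 (f i a)) := by
      ext t
      rw [mem_setOf_eq, hiff t]
      simp [Set.mem_pi]
    rw [this, volume_pi_pi]
    rw [ENNReal.ofReal_prod_of_nonneg (fun i _ => hpos i)]
    congr 1
    ext i
    rw [Real.volume_Ico, sub_zero]
  rw [h1]
  have h2 := Measure.prod_apply (μ := m) (ν := (volume : Measure (Fin d → ℝ))) hA
  have h3 := Measure.prod_apply_symm (μ := m) (ν := (volume : Measure (Fin d → ℝ))) hA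
  rw [h2] at h3
  exact h3
end Layer

lemma quantile_nonneg_of_zero {ν₀ : Measure ℝ} (hz : ∀ x < (0:ℝ), ν₀ (Iic x) = 0)
    {u : ℝ} (hu : 0 < u) : 0 ≤ quantile ν₀ u := by
  apply Real.sInf_nonneg
  intro x hx
  by_contra hneg
  push_neg at hneg
  rw [mem_setOf_eq, hz x hneg] at hx
  simp at hx
  linarith

section Lorentz
variable {Ω : Type*} [MeasurableSpace Ω] {d : ℕ}

lemma lorentz_core (μ : Measure Ω) [IsProbabilityMeasure μ] (hd : 0 < d)
    (Z : Fin d → Ω → ℝ) (hZm : ∀ i, Measurable (Z i)) (hZ0 : ∀ i ω, 0 ≤ Z i ω)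
    (ν' : Fin d → Measure ℝ) [∀ i, IsProbabilityMeasure (ν' i)]
    (hmarg : ∀ i, μ.map (Z i) = ν' i) (hzero : ∀ i, ∀ x < (0:ℝ), ν' i (Iic x) = 0) :
    ∫⁻ ω, ENNReal.ofReal (∏ i, Z i ω) ∂μ
      ≤ ∫⁻ u in Ioo (0:ℝ) 1, ENNReal.ofReal (∏ i, quantile (ν' i) u) := by
  haveI : Nonempty (Fin d) := ⟨⟨0, hd⟩⟩
  -- hypograph sets
  set A₁ : Set (Ω × (Fin d → ℝ)) := {p | ∀ i, p.2 i ∈ Ico 0 (Z i p.1)} with hA₁def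
  set A₂ : Set (ℝ × (Fin d → ℝ)) :=
    {p | p.1 ∈ Ioo (0:ℝ) 1 ∧ ∀ i, 0 ≤ p.2 i ∧ ((ν' i) (Iic (p.2 i))).toReal < p.1} with hA₂def
  have hA₁ : MeasurableSet A₁ := by
    have : A₁ = ⋂ i, ({p : Ω × (Fin d → ℝ) | 0 ≤ p.2 i} ∩ {p | p.2 i < Z i p.1}) := by
      ext p; simp [hA₁def, mem_Ico, forall_and]
    rw [this]
    have hsnd : ∀ i : Fin d, Measurable fun p : Ω × (Fin d → ℝ) => p.2 i :=
      fun i => (measurable_pi_apply i).comp measurable_snd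
    exact MeasurableSet.iInter fun i => (measurableSet_le measurable_const (hsnd i)).inter
      (measurableSet_lt (hsnd i) ((hZm i).comp measurable_fst))
  have hcdfm : ∀ i, Measurable fun x : ℝ => ((ν' i) (Iic x)).toReal := by
    intro i
    have : (fun x : ℝ => ((ν' i) (Iic x)).toReal) = fun x => cdf (ν' i) x := by
      ext x; rw [cdf_eq_real, measureReal_def]
    rw [this]
    exact (monotone_cdf (ν' i)).measurable
  have hA₂ : MeasurableSet A₂ := by
    have : A₂ = ({p : ℝ × (Fin d → ℝ) | p.1 ∈ Ioo (0:ℝ) 1} ∩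
        ⋂ i, ({p : ℝ × (Fin d → ℝ) | 0 ≤ p.2 i} ∩
          {p | ((ν' i) (Iic (p.2 i))).toReal < p.1})) := by
      ext p; simp [hA₂def, forall_and]
    rw [this]
    have hsnd : ∀ i : Fin d, Measurable fun p : ℝ × (Fin d → ℝ) => p.2 i :=
      fun i => (measurable_pi_apply i).comp measurable_snd
    exact (measurable_fst measurableSet_Ioo).inter (MeasurableSet.iInter fun i =>
      (measurableSet_le measurable_const (hsnd i)).inter
      (measurableSet_lt ((hcdfm i).comp (hsnd i)) measurable_fst))
  have lc1 := layer_cake μ A₁ hA₁ Z (by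
    filter_upwards with ω
    exact ⟨fun i => hZ0 i ω, fun t => Iff.rfl⟩)
  have lc2 := layer_cake (volume.restrict (Ioo (0:ℝ) 1)) A₂ hA₂
      (fun i u => quantile (ν' i) u) (by
    filter_upwards [ae_restrict_mem measurableSet_Ioo] with u hu
    refine ⟨fun i => quantile_nonneg_of_zero (hzero i) hu.1, fun t => ?_⟩
    simp only [hA₂def, mem_setOf_eq, mem_Ico]
    constructor
    · rintro ⟨-, h⟩ i
      exact ⟨(h i).1, (lt_quantile_iff (ν := ν' i) hu.1 hu.2).mpr (h i).2⟩
    · intro h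
      exact ⟨hu, fun i => ⟨(h i).1, (lt_quantile_iff (ν := ν' i) hu.1 hu.2).mp (h i).2⟩⟩)
  rw [lc1, lc2]
  refine lintegral_mono fun t => ?_
  by_cases hneg : ∃ i, t i < 0
  · obtain ⟨i0, hi0⟩ := hneg
    have : {ω | (ω, t) ∈ A₁} = ∅ := by
      ext ω
      simp only [hA₁def, mem_setOf_eq, mem_empty_iff_false, iff_false, not_forall]
      exact ⟨i0, fun h => absurd h.1 (not_le.mpr hi0)⟩
    rw [this]
    simp
  · push_neg at hneg
    obtain ⟨j, -, hj⟩ := Finset.exists_max_image Finset.univ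
      (fun i => ((ν' i) (Iic (t i))).toReal) ⟨Classical.arbitrary _, Finset.mem_univ _⟩
    set c := ((ν' j) (Iic (t j))).toReal with hc
    have hc0 : 0 ≤ c := ENNReal.toReal_nonneg
    -- LHS section bounded by ν' j (Ioi (t j))
    have hLHS : μ {ω | (ω, t) ∈ A₁} ≤ (ν' j) (Ioi (t j)) := by
      rw [← hmarg j, Measure.map_apply (hZm j) measurableSet_Ioi]
      refine measure_mono fun ω hω => ?_
      exact (hω j).2
    -- RHS section equals Ioo c 1
    have hsec : {u : ℝ | (u, t) ∈ A₂} = Ioo c 1 := by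
      ext u
      simp only [hA₂def, mem_setOf_eq, mem_Ioo]
      constructor
      · rintro ⟨⟨h0, h1⟩, h⟩
        exact ⟨(h j).2, h1⟩
      · rintro ⟨hcu, hu1⟩
        refine ⟨⟨lt_of_le_of_lt hc0 hcu, hu1⟩, fun i => ⟨hneg i, lt_of_le_of_lt ?_ hcu⟩⟩
        exact hj i (Finset.mem_univ i)
    have hRHS : (volume.restrict (Ioo (0:ℝ) 1)) {u | (u, t) ∈ A₂} = ENNReal.ofReal (1 - c) := by
      rw [Measure.restrict_apply' measurableSet_Ioo, hsec]
      have : Ioo c 1 ∩ Ioo (0:ℝ) 1 = Ioo c 1 := by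
        apply inter_eq_self_of_subset_left
        intro u hu
        exact ⟨lt_of_le_of_lt hc0 hu.1, hu.2⟩
      rw [this, Real.volume_Ioo]
    rw [hRHS]
    refine hLHS.trans ?_
    have hcompl := measure_compl (measurableSet_Iic (a := t j)) (measure_ne_top (ν' j) _)
    rw [compl_Iic, measure_univ] at hcompl
    rw [hcompl, ← ENNReal.ofReal_toReal (measure_ne_top (ν' j) (Iic (t j))), ← hc,
      ← ENNReal.ofReal_one, ← ENNReal.ofReal_sub _ hc0]
end Lorentz

section Part1
variable {d : ℕ}

lemma part1 (hd : Even d) (F : Fin d → Measure ℝ)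
    [∀ i, IsProbabilityMeasure (F i)]
    (hsym : ∀ i, (F i).map (fun x => -x) = F i)
    (hIntC : IntegrableOn (fun u => ∏ i, quantile (F i) u) (Icc (0:ℝ) 1) volume) :
    ∫ u in Icc (0:ℝ) 1, ∏ i, quantile (F i) u
        = ∫ u in Icc (0:ℝ) 1, ∏ i, quantile ((F i).map (fun x => |x|)) u := by
  set g : ℝ → ℝ := fun u => ∏ i, quantile (F i) u with hg
  set h : ℝ → ℝ := fun u => ∏ i, quantile ((F i).map (fun x => |x|)) u with hh
  have hone : ∀ᵐ x : ℝ ∂volume, x ≠ (1:ℝ) := by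
    have : volume ({1} : Set ℝ) = 0 := measure_singleton 1
    exact compl_mem_ae_iff.mpr this
  -- a.e. symmetry of g
  have hsymm_ae : ∀ᵐ u ∂volume, u ∈ Ioo (0:ℝ) 1 → g (1 - u) = g u := by
    have hall : ∀ᵐ u ∂volume, ∀ i : Fin d, u ∈ Ioo (0:ℝ) 1 →
        quantile (F i) (1 - u) = -quantile (F i) u := by
      rw [ae_all_iff]
      intro i
      exact (ae_restrict_iff' measurableSet_Ioo).mp (quantile_symm_ae (hsym i))
    filter_upwards [hall] with u hu huI
    have : g (1 - u) = ∏ i, -quantile (F i) u := by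
      simp only [hg]
      exact Finset.prod_congr rfl fun i _ => hu i huI
    rw [this]
    have : ∏ i : Fin d, -quantile (F i) u = ((-1:ℝ)^d) * ∏ i, quantile (F i) u := by
      calc ∏ i : Fin d, -quantile (F i) u = ∏ i : Fin d, (-1:ℝ) * quantile (F i) u := by
            simp [neg_one_mul]
        _ = (∏ _i : Fin d, (-1:ℝ)) * ∏ i, quantile (F i) u := Finset.prod_mul_distrib
        _ = ((-1:ℝ)^d) * ∏ i, quantile (F i) u := by
            rw [Finset.prod_const, Finset.card_univ, Fintype.card_fin]
    rw [this, hd.neg_one_pow, one_mul]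
  -- integrability
  have hInt1 : IntervalIntegrable g volume 0 (1/2) := by
    apply MeasureTheory.IntegrableOn.intervalIntegrable
    rw [uIcc_of_le (by norm_num)]
    exact hIntC.mono_set (Icc_subset_Icc le_rfl (by norm_num))
  have hInt2 : IntervalIntegrable g volume (1/2) 1 := by
    apply MeasureTheory.IntegrableOn.intervalIntegrable
    rw [uIcc_of_le (by norm_num)]
    exact hIntC.mono_set (Icc_subset_Icc (by norm_num) le_rfl)
  have e1 : ∫ u in Icc (0:ℝ) 1, g u = ∫ u in (0:ℝ)..1, g u := by
    rw [intervalIntegral.integral_of_le zero_le_one, integral_Icc_eq_integral_Ioc]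
  have eh1 : ∫ u in Icc (0:ℝ) 1, h u = ∫ u in (0:ℝ)..1, h u := by
    rw [intervalIntegral.integral_of_le zero_le_one, integral_Icc_eq_integral_Ioc]
  have esplit : ∫ u in (0:ℝ)..1, g u
      = (∫ u in (0:ℝ)..(1/2:ℝ), g u) + ∫ u in (1/2:ℝ)..1, g u :=
    (intervalIntegral.integral_add_adjacent_intervals hInt1 hInt2).symm
  have esub : ∫ u in (0:ℝ)..(1/2:ℝ), g u = ∫ u in (1/2:ℝ)..1, g (1 - u) := by
    rw [intervalIntegral.integral_comp_sub_left g 1]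
    norm_num
  have econg : ∫ u in (1/2:ℝ)..1, g (1 - u) = ∫ u in (1/2:ℝ)..1, g u := by
    apply intervalIntegral.integral_congr_ae
    filter_upwards [hsymm_ae, hone] with u hsu hne hin
    rw [uIoc_of_le (by norm_num : (1/2:ℝ) ≤ 1)] at hin
    exact hsu ⟨by linarith [hin.1], lt_of_le_of_ne hin.2 hne⟩
  have ehg : ∫ u in (0:ℝ)..1, h u = ∫ u in (0:ℝ)..1, g (2⁻¹ * u + 2⁻¹) := by
    apply intervalIntegral.integral_congr_ae
    filter_upwards [hone] with u hne hin
    rw [uIoc_of_le zero_le_one] at hin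
    have huI : u ∈ Ioo (0:ℝ) 1 := ⟨hin.1, lt_of_le_of_ne hin.2 hne⟩
    show h u = g (2⁻¹ * u + 2⁻¹)
    simp only [hh, hg]
    refine Finset.prod_congr rfl fun i _ => ?_
    rw [quantile_abs_eq (hsym i) huI]
    congr 1; ring
  have esub2 : ∫ u in (0:ℝ)..1, g (2⁻¹ * u + 2⁻¹)
      = (2:ℝ) * ∫ u in (1/2:ℝ)..1, g u := by
    rw [intervalIntegral.integral_comp_mul_add g (by norm_num : (2⁻¹:ℝ) ≠ 0) 2⁻¹]
    norm_num
  rw [e1, eh1, esplit, esub, econg, ehg, esub2]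
  ring
end Part1

/-- For `d` even and symmetric zero-mean marginals, the supremum of the expected product
equals `E(∏ G_i⁻¹(U))` and is attained by the comonotonic coupling `X_i = F_i⁻¹(U)`. -/
theorem stmt_6 (d : ℕ) (hd : Even d) (F : Fin d → Measure ℝ)
    [∀ i, IsProbabilityMeasure (F i)]
    (hsym : ∀ i, (F i).map (fun x => -x) = F i)
    (hL2 : ∀ i, MemLp (id : ℝ → ℝ) 2 (F i))
    (hIntQ : IntegrableOn
      (fun u => ∏ i, quantile ((F i).map (fun x => |x|)) u) (Icc (0:ℝ) 1) volume)
    (hIntC : IntegrableOn (fun u => ∏ i, quantile (F i) u) (Icc (0:ℝ) 1) volume) :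
    (∫ u in Icc (0:ℝ) 1, ∏ i, quantile (F i) u
        = ∫ u in Icc (0:ℝ) 1, ∏ i, quantile ((F i).map (fun x => |x|)) u) ∧
    (∀ (Ω : Type*) [MeasurableSpace Ω] (μ : Measure Ω) [IsProbabilityMeasure μ]
        (Y : Fin d → Ω → ℝ), (∀ i, Measurable (Y i)) → (∀ i, μ.map (Y i) = F i) →
        Integrable (fun ω => ∏ i, Y i ω) μ →
        ∫ ω, ∏ i, Y i ω ∂μ ≤ ∫ u in Icc (0:ℝ) 1, ∏ i, quantile (F i) u) := by
  have hpart1 := part1 hd F hsym hIntC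
  refine ⟨hpart1, ?_⟩
  intro Ω _ μ _ Y hYm hYmarg hYint
  rcases Nat.eq_zero_or_pos d with rfl | hd0
  · simp only [Finset.univ_eq_empty, Finset.prod_empty]
    rw [integral_const, setIntegral_const, probReal_univ, Real.volume_real_Icc]
    norm_num
  -- setup
  haveI : ∀ i, IsProbabilityMeasure ((F i).map (fun x => |x|)) :=
    fun i => Measure.isProbabilityMeasure_map measurable_abs.aemeasurable
  set ν' : Fin d → Measure ℝ := fun i => (F i).map (fun x => |x|) with hν'
  set Z : Fin d → Ω → ℝ := fun i ω => |Y i ω| with hZ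
  have hZm : ∀ i, Measurable (Z i) := fun i => (hYm i).abs
  have hmarg : ∀ i, μ.map (Z i) = ν' i := by
    intro i
    have : Z i = (fun x => |x|) ∘ Y i := rfl
    rw [this, ← Measure.map_map measurable_abs (hYm i), hYmarg i]
  have hzero : ∀ i, ∀ x < (0:ℝ), ν' i (Iic x) = 0 := fun i x hx => abs_Iic_neg_lt hx
  have hIntAbs : Integrable (fun ω => ∏ i, |Y i ω|) μ := by
    have := hYint.abs
    simpa [Finset.abs_prod] using this
  -- step 1
  have step1 : ∫ ω, ∏ i, Y i ω ∂μ ≤ ∫ ω, ∏ i, Z i ω ∂μ := by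
    calc ∫ ω, ∏ i, Y i ω ∂μ ≤ |∫ ω, ∏ i, Y i ω ∂μ| := le_abs_self _
      _ ≤ ∫ ω, ∏ i, Z i ω ∂μ := by
          have := norm_integral_le_integral_norm (μ := μ) (f := fun ω => ∏ i, Y i ω)
          simpa [Real.norm_eq_abs, Finset.abs_prod] using this
  -- step 2 (Bochner -> lintegral)
  have step2 : ∫ ω, ∏ i, Z i ω ∂μ = (∫⁻ ω, ENNReal.ofReal (∏ i, Z i ω) ∂μ).toReal := by
    rw [integral_eq_lintegral_of_nonneg_ae]
    · filter_upwards with ω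
      exact Finset.prod_nonneg fun i _ => abs_nonneg _
    · exact hIntAbs.aestronglyMeasurable
  -- step 3 (Lorentz)
  have step3 := lorentz_core μ hd0 Z hZm (fun i ω => abs_nonneg _) ν' hmarg hzero
  -- RHS integrability and positivity
  have hIntQ' : IntegrableOn (fun u => ∏ i, quantile (ν' i) u) (Ioo (0:ℝ) 1) volume :=
    hIntQ.mono_set Ioo_subset_Icc_self
  have hRfin : ∫⁻ u in Ioo (0:ℝ) 1, ENNReal.ofReal (∏ i, quantile (ν' i) u) ≠ ⊤ :=
    hIntQ'.lintegral_lt_top.ne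
  have step4 : ∫ u in Ioo (0:ℝ) 1, ∏ i, quantile (ν' i) u
      = (∫⁻ u in Ioo (0:ℝ) 1, ENNReal.ofReal (∏ i, quantile (ν' i) u)).toReal := by
    rw [integral_eq_lintegral_of_nonneg_ae]
    · filter_upwards [ae_restrict_mem measurableSet_Ioo] with u hu
      exact Finset.prod_nonneg fun i _ => quantile_abs_nonneg hu.1 (F i)
    · exact hIntQ'.aestronglyMeasurable
  have step5 : ∫ u in Ioo (0:ℝ) 1, ∏ i, quantile (ν' i) u
      = ∫ u in Icc (0:ℝ) 1, ∏ i, quantile (ν' i) u := by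
    rw [integral_Icc_eq_integral_Ioc, integral_Ioc_eq_integral_Ioo]
  calc ∫ ω, ∏ i, Y i ω ∂μ ≤ ∫ ω, ∏ i, Z i ω ∂μ := step1
    _ = (∫⁻ ω, ENNReal.ofReal (∏ i, Z i ω) ∂μ).toReal := step2
    _ ≤ (∫⁻ u in Ioo (0:ℝ) 1, ENNReal.ofReal (∏ i, quantile (ν' i) u)).toReal :=
        ENNReal.toReal_mono hRfin step3
    _ = ∫ u in Ioo (0:ℝ) 1, ∏ i, quantile (ν' i) u := step4.symm
    _ = ∫ u in Icc (0:ℝ) 1, ∏ i, quantile (ν' i) u := step5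
    _ = ∫ u in Icc (0:ℝ) 1, ∏ i, quantile (F i) u := hpart1.symm
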